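/- Let P1 ∈ ℝ^{n1×n1} and P2 ∈ ℝ^{n2×n2} be symmetric positive definite, C1 ∈ ℝ^{m×n1}, C2 ∈ ℝ^{m×n2}, and let D1, D2 ∈ ℝ^{m×m} be symmetric with D2 positive semidefinite and D1 D2 = 0. Define G0 = D1 + C1 P1^{-1} C1^T and H0 = D2 + C2 P2^{-1} C2^T. Then the block matrix [[P1 - C1^T D2 C1, -C1^T C2], [-C2^T C1, P2 - C2^T D1 C2]] is positive definite if and only if every complex eigenvalue of G0 H0 is real and strictly less than 1. -/

import Mathlib

set_option maxHeartbeats 1000000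

open Matrix

section Stmt3Helpers

lemma dmv {a b : Type*} [Fintype a] [Fintype b] (A : Matrix a b ℝ) (v : a → ℝ) (w : b → ℝ) :
    (A *ᵥ w) ⬝ᵥ v = w ⬝ᵥ (Aᵀ *ᵥ v) := by
  rw [dotProduct_comm, dotProduct_mulVec, ← Matrix.mulVec_transpose, dotProduct_comm]

lemma dmv' {a b : Type*} [Fintype a] [Fintype b] (A : Matrix a b ℝ) (v : a → ℝ) (w : b → ℝ) :
    v ⬝ᵥ (A *ᵥ w) = (Aᵀ *ᵥ v) ⬝ᵥ w := by
  rw [dotProduct_mulVec, ← Matrix.mulVec_transpose]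

lemma dot_self_nonneg {k : ℕ} (u : Fin k → ℝ) : 0 ≤ u ⬝ᵥ u :=
  Finset.sum_nonneg fun i _ => mul_self_nonneg (u i)

lemma dot_self_pos {k : ℕ} {u : Fin k → ℝ} (hu : u ≠ 0) : 0 < u ⬝ᵥ u :=
  lt_of_le_of_ne (dot_self_nonneg u) (fun h => hu (dotProduct_self_eq_zero.mp h.symm))

lemma herm_of_symm {k : ℕ} {A : Matrix (Fin k) (Fin k) ℝ} (h : Aᵀ = A) : A.IsHermitian := by
  show Aᴴ = A
  rw [Matrix.conjTranspose_eq_transpose_of_trivial, h]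

lemma proj_decomp {k : ℕ} (A : Matrix (Fin k) (Fin k) ℝ) (hA : Aᵀ = A) (y : Fin k → ℝ) :
    ∃ s r : Fin k → ℝ, y = A *ᵥ s + r ∧ A *ᵥ r = 0 ∧ r ⬝ᵥ (A *ᵥ s) = 0 := by
  classical
  set T := Matrix.toEuclideanLin A with hT
  set K : Submodule ℝ (EuclideanSpace ℝ (Fin k)) := LinearMap.range T with hK
  set y' : EuclideanSpace ℝ (Fin k) := (WithLp.equiv 2 _).symm y with hy'
  set p : EuclideanSpace ℝ (Fin k) := (K.orthogonalProjectionOnto y' : EuclideanSpace ℝ (Fin k)) with hp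
  have hpK : p ∈ K := (K.orthogonalProjectionOnto y').2
  obtain ⟨s, hs⟩ := hpK
  have hr : y' - p ∈ Kᗮ := Submodule.sub_starProjection_mem_orthogonal (K := K) y'
  have horth : ∀ u : EuclideanSpace ℝ (Fin k), inner ℝ (T u) (y' - p) = (0 : ℝ) := by
    intro u; exact hr (T u) ⟨u, rfl⟩
  have hinner : ∀ a b : EuclideanSpace ℝ (Fin k),
      inner ℝ a b = (WithLp.equiv 2 (Fin k → ℝ) a) ⬝ᵥ (WithLp.equiv 2 (Fin k → ℝ) b) := by
    intro a b
    simp [PiLp.inner_apply, dotProduct, RCLike.inner_apply, mul_comm]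
  set s₀ : Fin k → ℝ := WithLp.equiv 2 (Fin k → ℝ) s with hs₀
  have hps : WithLp.equiv 2 (Fin k → ℝ) p = A *ᵥ s₀ := by
    rw [← hs, Matrix.toEuclideanLin_apply]; simp [hs₀]
  set r : Fin k → ℝ := y - A *ᵥ s₀ with hrdef
  have claim1 : ∀ u : Fin k → ℝ, (A *ᵥ u) ⬝ᵥ r = 0 := by
    intro u
    have := horth ((WithLp.equiv 2 (Fin k → ℝ)).symm u)
    rw [hinner] at this
    rw [Matrix.toEuclideanLin_apply] at this
    have hps' : p.ofLp = A *ᵥ s₀ := hps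
    simpa [hps, hps', hrdef, Matrix.sub_mulVec, hy'] using this
  have hAr : A *ᵥ r = 0 := by
    rw [← dotProduct_self_eq_zero (v := A *ᵥ r)]
    have h1 : (A *ᵥ r) ⬝ᵥ (A *ᵥ r) = (A *ᵥ (A *ᵥ r)) ⬝ᵥ r := by
      rw [dotProduct_comm, dotProduct_mulVec, ← Matrix.mulVec_transpose, hA]
    rw [h1, claim1]
  exact ⟨s₀, r, by simp [hrdef], hAr, by rw [dotProduct_comm]; exact claim1 s₀⟩

lemma spec_swap {k : ℕ} (a b : Matrix (Fin k) (Fin k) ℂ) :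
    spectrum ℂ (a * b) = spectrum ℂ (b * a) := by
  ext μ
  by_cases hμ : μ = 0
  · subst hμ
    rw [spectrum.zero_mem_iff, spectrum.zero_mem_iff]
    rw [Matrix.isUnit_iff_isUnit_det, Matrix.isUnit_iff_isUnit_det, Matrix.det_mul,
      Matrix.det_mul, mul_comm]
  · constructor <;> intro h
    · exact ((spectrum.nonzero_mul_comm a b).le ⟨h, hμ⟩).1
    · exact ((spectrum.nonzero_mul_comm b a).le ⟨h, hμ⟩).1

lemma eig_exists {k : ℕ} {M : Matrix (Fin k) (Fin k) ℂ} {μ : ℂ}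
    (h : μ ∈ spectrum ℂ M) : ∃ v : Fin k → ℂ, v ≠ 0 ∧ M *ᵥ v = μ • v := by
  rw [spectrum.mem_iff] at h
  have hdet : (algebraMap ℂ (Matrix (Fin k) (Fin k) ℂ) μ - M).det = 0 := by
    by_contra hd
    exact h ((Matrix.isUnit_iff_isUnit_det _).mpr (isUnit_iff_ne_zero.mpr hd))
  obtain ⟨v, hv0, hv⟩ := (Matrix.exists_mulVec_eq_zero_iff).mpr hdet
  refine ⟨v, hv0, ?_⟩
  have h1 : (algebraMap ℂ (Matrix (Fin k) (Fin k) ℂ) μ) *ᵥ v - M *ᵥ v = 0 := by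
    rw [← Matrix.sub_mulVec]; exact hv
  have h2 : (algebraMap ℂ (Matrix (Fin k) (Fin k) ℂ) μ) *ᵥ v = μ • v := by
    rw [Algebra.algebraMap_eq_smul_one, Matrix.smul_mulVec, Matrix.one_mulVec]
  rw [h2] at h1
  rw [sub_eq_zero] at h1; exact h1.symm

lemma spec_cond_of_posdef {k : ℕ} {R : Matrix (Fin k) (Fin k) ℝ} (hR : Rᵀ = R)
    (h : ∀ x : Fin k → ℝ, x ≠ 0 → x ⬝ᵥ (R *ᵥ x) < x ⬝ᵥ x) :
    ∀ μ ∈ spectrum ℂ (R.map Complex.ofReal), μ.im = 0 ∧ μ.re < 1 := by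
  intro μ hμ
  set M := R.map Complex.ofReal with hM
  have hMh : Mᴴ = M := by
    ext i j
    have hsymm : R j i = R i j := (congrFun (congrFun hR i) j : Rᵀ i j = R i j)
    simp [hM, Matrix.conjTranspose_apply, Matrix.map_apply, hsymm]
  obtain ⟨v, hv0, hv⟩ := eig_exists hμ
  set q : ℂ := star v ⬝ᵥ (M *ᵥ v) with hq
  have hqc : q = μ * (star v ⬝ᵥ v) := by
    rw [hq, hv, dotProduct_smul]; rfl
  set γ : ℝ := ∑ i, Complex.normSq (v i) with hγ
  have hcre : star v ⬝ᵥ v = Complex.ofReal γ := by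
    rw [dotProduct, hγ]
    push_cast
    refine Finset.sum_congr rfl fun i _ => ?_
    simp [Complex.normSq_eq_conj_mul_self]
  have hγpos : 0 < γ := by
    have : ∃ i, v i ≠ 0 := by
      by_contra hcon
      push_neg at hcon
      exact hv0 (funext fun i => hcon i)
    obtain ⟨i, hi⟩ := this
    exact Finset.sum_pos' (fun j _ => Complex.normSq_nonneg _)
      ⟨i, Finset.mem_univ i, Complex.normSq_pos.mpr hi⟩
  have hqreal : (starRingEnd ℂ) q = q := by
    have h1 : q = star (star (M *ᵥ v) ⬝ᵥ v) := star_dotProduct _ _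
    have h2 : (starRingEnd ℂ) q = star (M *ᵥ v) ⬝ᵥ v := by
      rw [h1]; simp
    rw [h2, star_mulVec, hMh]
    rw [← dotProduct_mulVec]
  have hμim : μ.im = 0 := by
    have h3 : q.im = 0 := Complex.conj_eq_iff_im.mp hqreal
    have h4 : q.im = μ.im * γ := by
      rw [hqc, hcre, Complex.mul_im]
      simp
    rw [h3] at h4
    rcases mul_eq_zero.mp h4.symm with h | h
    · exact h
    · exact absurd h (ne_of_gt hγpos)
  refine ⟨hμim, ?_⟩
  set t : ℝ := μ.re with ht
  have hμt : μ = Complex.ofReal t := by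
    apply Complex.ext <;> simp [ht, hμim]
  have hre : ∀ (w : Fin k → ℝ), (∀ i, w i = (v i).re) ∨ (∀ i, w i = (v i).im) →
      R *ᵥ w = t • w := by
    intro w hw
    funext i
    have hei := congrFun hv i
    have heiv : (M *ᵥ v) i = (Complex.ofReal t) * v i := by
      rw [hei, hμt]; rfl
    have hlhs_re : ((M *ᵥ v) i).re = (R *ᵥ (fun j => (v j).re)) i := by
      simp only [Matrix.mulVec, dotProduct, hM, Matrix.map_apply, Complex.re_sum]
      exact Finset.sum_congr rfl fun j _ => by simp
    have hlhs_im : ((M *ᵥ v) i).im = (R *ᵥ (fun j => (v j).im)) i := by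
      simp only [Matrix.mulVec, dotProduct, hM, Matrix.map_apply, Complex.im_sum]
      exact Finset.sum_congr rfl fun j _ => by simp
    rcases hw with hw | hw
    · have hthis : (R *ᵥ (fun j => (v j).re)) i = t * (v i).re := by
        rw [← hlhs_re, heiv]; simp
      have hww : w = (fun j => (v j).re) := funext hw
      rw [hww]
      simpa using hthis
    · have hthis : (R *ᵥ (fun j => (v j).im)) i = t * (v i).im := by
        rw [← hlhs_im, heiv]; simp
      have hww : w = (fun j => (v j).im) := funext hw
      rw [hww]
      simpa using hthis
  have hune : (fun j => (v j).re) ≠ 0 ∨ (fun j => (v j).im) ≠ 0 := by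
    by_contra hcon
    push_neg at hcon
    refine hv0 (funext fun i => ?_)
    apply Complex.ext
    · exact congrFun hcon.1 i
    · exact congrFun hcon.2 i
  obtain ⟨u, hu0, hu⟩ : ∃ u : Fin k → ℝ, u ≠ 0 ∧ R *ᵥ u = t • u := by
    rcases hune with h1 | h1
    · exact ⟨_, h1, hre _ (Or.inl fun i => rfl)⟩
    · exact ⟨_, h1, hre _ (Or.inr fun i => rfl)⟩
  have hlt := h u hu0
  rw [hu, dotProduct_smul] at hlt
  have hupos := dot_self_pos hu0
  have hfin : t * (u ⬝ᵥ u) < u ⬝ᵥ u := hlt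
  nlinarith

lemma real_spectrum_to_complex {k : ℕ} {R : Matrix (Fin k) (Fin k) ℝ} {t : ℝ}
    (h : t ∈ spectrum ℝ R) :
    (t : ℂ) ∈ spectrum ℂ (R.map Complex.ofReal) := by
  rw [spectrum.mem_iff] at h ⊢
  intro hu
  apply h
  rw [Matrix.isUnit_iff_isUnit_det, isUnit_iff_ne_zero]
  rw [Matrix.isUnit_iff_isUnit_det, isUnit_iff_ne_zero] at hu
  intro hdet
  apply hu
  have hmapeq : (algebraMap ℝ (Matrix (Fin k) (Fin k) ℝ) t - R).map Complex.ofReal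
      = algebraMap ℂ (Matrix (Fin k) (Fin k) ℂ) (t : ℂ) - R.map Complex.ofReal := by
    ext i j
    by_cases hij : i = j <;>
      simp [Matrix.map_apply, Matrix.algebraMap_matrix_apply, hij]
  have hh := RingHom.map_det Complex.ofRealHom (algebraMap ℝ (Matrix (Fin k) (Fin k) ℝ) t - R)
  rw [hdet] at hh
  simp only [map_zero] at hh
  rw [← hmapeq]
  exact hh.symm

lemma posdef_of_spec_cond {k : ℕ} {R : Matrix (Fin k) (Fin k) ℝ} (hR : Rᵀ = R)
    (h : ∀ μ ∈ spectrum ℂ (R.map Complex.ofReal), μ.im = 0 ∧ μ.re < 1) :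
    ∀ x : Fin k → ℝ, x ≠ 0 → x ⬝ᵥ (R *ᵥ x) < x ⬝ᵥ x := by
  have hherm : R.IsHermitian := herm_of_symm hR
  set eig := hherm.eigenvalues with heig
  set B := hherm.eigenvectorBasis with hB
  have heiglt : ∀ j, eig j < 1 := by
    intro j
    have hmem : eig j ∈ spectrum ℝ R := hherm.eigenvalues_mem_spectrum_real j
    have := h (eig j) (real_spectrum_to_complex hmem)
    simpa using this.2
  have hmul : ∀ j, R *ᵥ ⇑(B j) = eig j • ⇑(B j) := fun j => hherm.mulVec_eigenvectorBasis j
  intro x hx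
  set x' : EuclideanSpace ℝ (Fin k) := (WithLp.equiv 2 _).symm x with hx'
  have hinner : ∀ a b : EuclideanSpace ℝ (Fin k),
      inner ℝ a b = (WithLp.equiv 2 (Fin k → ℝ) a) ⬝ᵥ (WithLp.equiv 2 (Fin k → ℝ) b) := by
    intro a b
    simp [PiLp.inner_apply, dotProduct, RCLike.inner_apply, mul_comm]
  set c : Fin k → ℝ := fun j => inner ℝ (B j) x' with hc
  have hParseval : x ⬝ᵥ x = ∑ j, c j * c j := by
    have hps := B.sum_inner_mul_inner x' x'
    rw [hinner] at hps
    have h2 : ∀ j, inner ℝ x' (B j) = c j := fun j => real_inner_comm _ _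
    calc x ⬝ᵥ x = ∑ j, inner ℝ x' (B j) * inner ℝ (B j) x' := by
          rw [hps]; rfl
      _ = ∑ j, c j * c j := by
          refine Finset.sum_congr rfl fun j _ => by rw [h2 j]
  have hRay : x ⬝ᵥ (R *ᵥ x) = ∑ j, eig j * (c j * c j) := by
    set y' : EuclideanSpace ℝ (Fin k) := (WithLp.equiv 2 _).symm (R *ᵥ x) with hy'
    have hps := B.sum_inner_mul_inner x' y'
    rw [hinner] at hps
    have hBy : ∀ j, inner ℝ (B j) y' = eig j * c j := by
      intro j
      rw [hinner]
      rw [hy', Equiv.apply_symm_apply]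
      rw [dotProduct_mulVec, ← Matrix.mulVec_transpose, hR,
        show (WithLp.equiv 2 (Fin k → ℝ)) (B j) = (B j).ofLp from rfl, hmul j, smul_dotProduct]
      have hcj : c j = (WithLp.equiv 2 (Fin k → ℝ)) (B j) ⬝ᵥ x := by
        rw [hc]
        simp only []
        rw [hinner, hx', Equiv.apply_symm_apply]
      rw [hcj]
      rfl
    have h2 : ∀ j, inner ℝ x' (B j) = c j := fun j => real_inner_comm _ _
    calc x ⬝ᵥ (R *ᵥ x) = ∑ j, inner ℝ x' (B j) * inner ℝ (B j) y' := by
          rw [hps]; rfl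
      _ = ∑ j, eig j * (c j * c j) := by
          refine Finset.sum_congr rfl fun j _ => ?_
          rw [h2 j, hBy j]; ring
  rw [hParseval, hRay]
  have hcne : ∃ j, c j ≠ 0 := by
    by_contra hcon
    push_neg at hcon
    have hzero : x ⬝ᵥ x = 0 := by
      rw [hParseval]
      exact Finset.sum_eq_zero fun j _ => by rw [hcon j, mul_zero]
    exact absurd hzero (ne_of_gt (dot_self_pos hx))
  obtain ⟨j0, hj0⟩ := hcne
  have hle : ∀ j ∈ Finset.univ, eig j * (c j * c j) ≤ c j * c j := by
    intro j _
    have := (heiglt j).le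
    nlinarith [mul_self_nonneg (c j)]
  apply Finset.sum_lt_sum hle
  refine ⟨j0, Finset.mem_univ j0, ?_⟩
  have hc2 : 0 < c j0 * c j0 := mul_self_pos.mpr hj0
  exact mul_lt_of_lt_one_left hc2 (heiglt j0)

open scoped MatrixOrder in
lemma psd_sqrt_exists {k : ℕ} {A : Matrix (Fin k) (Fin k) ℝ} (hA : A.PosSemidef) :
    ∃ S : Matrix (Fin k) (Fin k) ℝ, S.PosSemidef ∧ S * S = A :=
  ⟨CFC.sqrt A, (CFC.sqrt_nonneg A).posSemidef, CFC.sqrt_mul_sqrt_self A hA.nonneg⟩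

end Stmt3Helpers

theorem stmt_3 {n1 n2 m : ℕ}
    (P1 : Matrix (Fin n1) (Fin n1) ℝ) (P2 : Matrix (Fin n2) (Fin n2) ℝ)
    (C1 : Matrix (Fin m) (Fin n1) ℝ) (C2 : Matrix (Fin m) (Fin n2) ℝ)
    (D1 D2 : Matrix (Fin m) (Fin m) ℝ)
    (hP1symm : P1ᵀ = P1)
    (hP1pd : ∀ x : Fin n1 → ℝ, x ≠ 0 → 0 < x ⬝ᵥ P1.mulVec x)
    (hP2symm : P2ᵀ = P2)
    (hP2pd : ∀ x : Fin n2 → ℝ, x ≠ 0 → 0 < x ⬝ᵥ P2.mulVec x)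
    (hD1symm : D1ᵀ = D1) (hD2symm : D2ᵀ = D2)
    (hD2psd : ∀ x : Fin m → ℝ, 0 ≤ x ⬝ᵥ D2.mulVec x)
    (hD12 : D1 * D2 = 0) :
    (∀ x : (Fin n1 ⊕ Fin n2) → ℝ, x ≠ 0 →
        0 < x ⬝ᵥ (Matrix.fromBlocks
            (P1 - C1ᵀ * D2 * C1) (-(C1ᵀ * C2))
            (-(C2ᵀ * C1)) (P2 - C2ᵀ * D1 * C2)).mulVec x) ↔
      (∀ μ ∈ spectrum ℂ
          (((D1 + C1 * P1⁻¹ * C1ᵀ) * (D2 + C2 * P2⁻¹ * C2ᵀ)).map Complex.ofReal),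
        μ.im = 0 ∧ μ.re < 1) := by
  classical
  -- basic structures
  have hP1pdM : P1.PosDef := .of_dotProduct_mulVec_pos (herm_of_symm hP1symm) fun x hx => by simpa using hP1pd x hx
  have hP2pdM : P2.PosDef := .of_dotProduct_mulVec_pos (herm_of_symm hP2symm) fun x hx => by simpa using hP2pd x hx
  have hD2psdM : D2.PosSemidef := .of_dotProduct_mulVec_nonneg (herm_of_symm hD2symm) fun x => by simpa using hD2psd x
  have hP1inv : P1 * P1⁻¹ = 1 := Matrix.mul_nonsing_inv _ (Matrix.isUnit_iff_isUnit_det P1 |>.mp hP1pdM.isUnit)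
  have hP2inv : P2 * P2⁻¹ = 1 := Matrix.mul_nonsing_inv _ (Matrix.isUnit_iff_isUnit_det P2 |>.mp hP2pdM.isUnit)
  have hP2inv' : P2⁻¹ * P2 = 1 := Matrix.nonsing_inv_mul _ (Matrix.isUnit_iff_isUnit_det P2 |>.mp hP2pdM.isUnit)
  have hP1invsymm : P1⁻¹ᵀ = P1⁻¹ := by rw [Matrix.transpose_nonsing_inv, hP1symm]
  have hP2invsymm : P2⁻¹ᵀ = P2⁻¹ := by rw [Matrix.transpose_nonsing_inv, hP2symm]
  have hP1invpd : P1⁻¹.PosDef := hP1pdM.inv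
  have hP2invpd : P2⁻¹.PosDef := hP2pdM.inv
  obtain ⟨sD2, hsD2psd', hsD2sq'⟩ := psd_sqrt_exists hD2psdM
  have hsD2psd : sD2.PosSemidef := hsD2psd'
  have hsD2symm : sD2ᵀ = sD2 := by
    rw [← Matrix.conjTranspose_eq_transpose_of_trivial]; exact hsD2psd.isHermitian
  have hsD2sq : sD2 * sD2 = D2 := hsD2sq'
  have hD1sD2 : D1 * sD2 = 0 := by
    have h1 : (D1 * sD2) * (D1 * sD2)ᴴ = 0 := by
      rw [Matrix.conjTranspose_eq_transpose_of_trivial, Matrix.transpose_mul, hsD2symm, hD1symm]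
      calc D1 * sD2 * (sD2 * D1) = D1 * (sD2 * sD2) * D1 := by
            simp only [mul_assoc]
        _ = 0 := by rw [hsD2sq, hD12, zero_mul]
    exact Matrix.self_mul_conjTranspose_eq_zero.mp h1
  set G0 := D1 + C1 * P1⁻¹ * C1ᵀ with hG0def
  set H0 := D2 + C2 * P2⁻¹ * C2ᵀ with hH0def
  have hG0symm : G0ᵀ = G0 := by
    rw [hG0def, Matrix.transpose_add, hD1symm, Matrix.transpose_mul, Matrix.transpose_mul,
      Matrix.transpose_transpose, hP1invsymm]
    rw [← Matrix.mul_assoc]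
  have hH0psd : H0.PosSemidef := by
    have h2 := hP2invpd.posSemidef.mul_mul_conjTranspose_same C2
    rw [Matrix.conjTranspose_eq_transpose_of_trivial] at h2
    exact hD2psdM.add h2
  have hH0symm : H0ᵀ = H0 := by
    rw [← Matrix.conjTranspose_eq_transpose_of_trivial]; exact hH0psd.isHermitian
  obtain ⟨sH0, hsH0psd', hsH0sq'⟩ := psd_sqrt_exists hH0psd
  have hsH0psd : sH0.PosSemidef := hsH0psd'
  have hsH0symm : sH0ᵀ = sH0 := by
    rw [← Matrix.conjTranspose_eq_transpose_of_trivial]; exact hsH0psd.isHermitian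
  have hsH0sq : sH0 * sH0 = H0 := hsH0sq'
  -- the quadratic forms
  set Qm : (Fin n1 → ℝ) → (Fin n2 → ℝ) → ℝ := fun x1 x2 =>
    x1 ⬝ᵥ (P1 *ᵥ x1) + x2 ⬝ᵥ (P2 *ᵥ x2) - (C1 *ᵥ x1) ⬝ᵥ (D2 *ᵥ (C1 *ᵥ x1))
      - 2 * ((C1 *ᵥ x1) ⬝ᵥ (C2 *ᵥ x2)) - (C2 *ᵥ x2) ⬝ᵥ (D1 *ᵥ (C2 *ᵥ x2)) with hQm
  set Phi : (Fin n1 → ℝ) → (Fin n2 → ℝ) → (Fin m → ℝ) → ℝ := fun x1 x2 w =>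
    x1 ⬝ᵥ (P1 *ᵥ x1) + x2 ⬝ᵥ (P2 *ᵥ x2) + w ⬝ᵥ w
      - 2 * ((C1 *ᵥ x1) ⬝ᵥ (sD2 *ᵥ w)) - 2 * ((C1 *ᵥ x1) ⬝ᵥ (C2 *ᵥ x2))
      - (C2 *ᵥ x2) ⬝ᵥ (D1 *ᵥ (C2 *ᵥ x2)) with hPhi
  set QII : (Fin m → ℝ) → (Fin n2 → ℝ) → ℝ := fun w x2 =>
    w ⬝ᵥ w + x2 ⬝ᵥ (P2 *ᵥ x2)
      - (sD2 *ᵥ w + C2 *ᵥ x2) ⬝ᵥ (G0 *ᵥ (sD2 *ᵥ w + C2 *ᵥ x2)) with hQII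
  -- the key algebraic identities
  have id0 : ∀ (x1 : Fin n1 → ℝ) (x2 : Fin n2 → ℝ),
      (Sum.elim x1 x2) ⬝ᵥ ((Matrix.fromBlocks
            (P1 - C1ᵀ * D2 * C1) (-(C1ᵀ * C2))
            (-(C2ᵀ * C1)) (P2 - C2ᵀ * D1 * C2)) *ᵥ (Sum.elim x1 x2)) = Qm x1 x2 := by
    intro x1 x2
    have dC1 : ∀ (v : Fin n1 → ℝ) (w : Fin m → ℝ), v ⬝ᵥ (C1ᵀ *ᵥ w) = (C1 *ᵥ v) ⬝ᵥ w :=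
      fun v w => by rw [dmv', Matrix.transpose_transpose]
    have dC2 : ∀ (v : Fin n2 → ℝ) (w : Fin m → ℝ), v ⬝ᵥ (C2ᵀ *ᵥ w) = (C2 *ᵥ v) ⬝ᵥ w :=
      fun v w => by rw [dmv', Matrix.transpose_transpose]
    simp only [hQm, Matrix.fromBlocks_mulVec, sumElim_dotProduct_sumElim,
      Matrix.sub_mulVec, Matrix.neg_mulVec, Matrix.add_mulVec,
      dotProduct_add, add_dotProduct, dotProduct_sub, sub_dotProduct, dotProduct_neg,
      neg_dotProduct, ← Matrix.mulVec_mulVec, dC1, dC2, Sum.elim_comp_inl, Sum.elim_comp_inr]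
    rw [dotProduct_comm (C2 *ᵥ x2) (C1 *ᵥ x1)]
    ring
  have id1 : ∀ (x1 : Fin n1 → ℝ) (x2 : Fin n2 → ℝ) (w : Fin m → ℝ),
      Phi x1 x2 w = Qm x1 x2
        + (w - sD2 *ᵥ (C1 *ᵥ x1)) ⬝ᵥ (w - sD2 *ᵥ (C1 *ᵥ x1)) := by
    intro x1 x2 w
    have e1 : (sD2 *ᵥ (C1 *ᵥ x1)) ⬝ᵥ (sD2 *ᵥ (C1 *ᵥ x1))
        = (C1 *ᵥ x1) ⬝ᵥ (D2 *ᵥ (C1 *ᵥ x1)) := by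
      rw [dmv, hsD2symm, Matrix.mulVec_mulVec, hsD2sq]
    have e2 : w ⬝ᵥ (sD2 *ᵥ (C1 *ᵥ x1)) = (C1 *ᵥ x1) ⬝ᵥ (sD2 *ᵥ w) := by
      rw [dotProduct_comm, dmv, hsD2symm]
    have e3 : (sD2 *ᵥ (C1 *ᵥ x1)) ⬝ᵥ w = (C1 *ᵥ x1) ⬝ᵥ (sD2 *ᵥ w) := by
      rw [dmv, hsD2symm]
    simp only [hPhi, hQm, dotProduct_sub, sub_dotProduct, e1, e2, e3]
    ring
  have id2 : ∀ (x1 : Fin n1 → ℝ) (x2 : Fin n2 → ℝ) (w : Fin m → ℝ),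
      Phi x1 x2 w = QII w x2
        + (x1 - P1⁻¹ *ᵥ (C1ᵀ *ᵥ (sD2 *ᵥ w + C2 *ᵥ x2)))
            ⬝ᵥ (P1 *ᵥ (x1 - P1⁻¹ *ᵥ (C1ᵀ *ᵥ (sD2 *ᵥ w + C2 *ᵥ x2)))) := by
    intro x1 x2 w
    set bb : Fin m → ℝ := sD2 *ᵥ w + C2 *ᵥ x2 with hbb
    set c : Fin n1 → ℝ := C1ᵀ *ᵥ bb with hcdef
    have hsD2D1 : sD2 * D1 = 0 := by
      have : (D1 * sD2)ᵀ = sD2 * D1 := by rw [Matrix.transpose_mul, hsD2symm, hD1symm]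
      rw [← this, hD1sD2, Matrix.transpose_zero]
    have hD1bb : D1 *ᵥ bb = D1 *ᵥ (C2 *ᵥ x2) := by
      rw [hbb, Matrix.mulVec_add, Matrix.mulVec_mulVec, hD1sD2, Matrix.zero_mulVec, zero_add]
    have hbbD1 : bb ⬝ᵥ (D1 *ᵥ bb) = (C2 *ᵥ x2) ⬝ᵥ (D1 *ᵥ (C2 *ᵥ x2)) := by
      rw [hD1bb, hbb, add_dotProduct]
      have : (sD2 *ᵥ w) ⬝ᵥ (D1 *ᵥ (C2 *ᵥ x2)) = 0 := by
        rw [dmv, hsD2symm, Matrix.mulVec_mulVec, hsD2D1, Matrix.zero_mulVec, dotProduct_zero]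
      rw [this, zero_add]
    have hbbS1 : bb ⬝ᵥ ((C1 * P1⁻¹ * C1ᵀ) *ᵥ bb) = c ⬝ᵥ (P1⁻¹ *ᵥ c) := by
      rw [← Matrix.mulVec_mulVec, ← Matrix.mulVec_mulVec, dmv', ← hcdef]
    have hbbG0 : bb ⬝ᵥ (G0 *ᵥ bb)
        = (C2 *ᵥ x2) ⬝ᵥ (D1 *ᵥ (C2 *ᵥ x2)) + c ⬝ᵥ (P1⁻¹ *ᵥ c) := by
      rw [hG0def, Matrix.add_mulVec, dotProduct_add, hbbD1, hbbS1]
    have hP1c : P1 *ᵥ (P1⁻¹ *ᵥ c) = c := by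
      rw [Matrix.mulVec_mulVec, hP1inv, Matrix.one_mulVec]
    have hx1c : x1 ⬝ᵥ c = (C1 *ᵥ x1) ⬝ᵥ bb := by
      rw [hcdef, dmv', Matrix.transpose_transpose]
    have hc2 : (P1⁻¹ *ᵥ c) ⬝ᵥ (P1 *ᵥ x1) = (C1 *ᵥ x1) ⬝ᵥ bb := by
      rw [dmv, hP1invsymm, Matrix.mulVec_mulVec, Matrix.nonsing_inv_mul _
        (Matrix.isUnit_iff_isUnit_det P1 |>.mp hP1pdM.isUnit), Matrix.one_mulVec,
        dotProduct_comm, hx1c]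
    have hc3 : (P1⁻¹ *ᵥ c) ⬝ᵥ c = c ⬝ᵥ (P1⁻¹ *ᵥ c) := by
      rw [dmv, hP1invsymm]
    have hsq : (x1 - P1⁻¹ *ᵥ c) ⬝ᵥ (P1 *ᵥ (x1 - P1⁻¹ *ᵥ c))
        = x1 ⬝ᵥ (P1 *ᵥ x1) - 2 * ((C1 *ᵥ x1) ⬝ᵥ bb) + c ⬝ᵥ (P1⁻¹ *ᵥ c) := by
      rw [Matrix.mulVec_sub, dotProduct_sub, sub_dotProduct, sub_dotProduct, hP1c, hx1c,
        hc2, hc3]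
      ring
    have hcross : (C1 *ᵥ x1) ⬝ᵥ bb
        = (C1 *ᵥ x1) ⬝ᵥ (sD2 *ᵥ w) + (C1 *ᵥ x1) ⬝ᵥ (C2 *ᵥ x2) := by
      rw [hbb, dotProduct_add]
    simp only [hPhi, hQII, ← hbb, ← hcdef, hbbG0, hsq, hcross]
    ring
  -- chain of equivalences
  have hiff01 : (∀ x : (Fin n1 ⊕ Fin n2) → ℝ, x ≠ 0 →
        0 < x ⬝ᵥ (Matrix.fromBlocks
            (P1 - C1ᵀ * D2 * C1) (-(C1ᵀ * C2))
            (-(C2ᵀ * C1)) (P2 - C2ᵀ * D1 * C2)).mulVec x) ↔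
      (∀ (x1 : Fin n1 → ℝ) (x2 : Fin n2 → ℝ), (x1 ≠ 0 ∨ x2 ≠ 0) → 0 < Qm x1 x2) := by
    constructor
    · intro h x1 x2 hx
      have hne : Sum.elim x1 x2 ≠ 0 := by
        intro hcon
        rcases hx with h1 | h1
        · exact h1 (funext fun i => congrFun hcon (Sum.inl i))
        · exact h1 (funext fun i => congrFun hcon (Sum.inr i))
      have := h (Sum.elim x1 x2) hne
      rwa [id0 x1 x2] at this
    · intro h x hx
      have hxe : x = Sum.elim (fun i => x (Sum.inl i)) (fun i => x (Sum.inr i)) := by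
        funext i; cases i <;> rfl
      have hne : (fun i => x (Sum.inl i)) ≠ 0 ∨ (fun i => x (Sum.inr i)) ≠ 0 := by
        by_contra hcon
        push_neg at hcon
        apply hx
        funext i
        cases i with
        | inl i => exact congrFun hcon.1 i
        | inr i => exact congrFun hcon.2 i
      have h2 := h _ _ hne
      rw [← id0] at h2
      show 0 < x ⬝ᵥ (Matrix.fromBlocks (P1 - C1ᵀ * D2 * C1) (-(C1ᵀ * C2)) (-(C2ᵀ * C1))
        (P2 - C2ᵀ * D1 * C2)) *ᵥ x
      rw [hxe]
      exact h2
  have hiff12 : (∀ (x1 : Fin n1 → ℝ) (x2 : Fin n2 → ℝ), (x1 ≠ 0 ∨ x2 ≠ 0) → 0 < Qm x1 x2) ↔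
      (∀ (x1 : Fin n1 → ℝ) (x2 : Fin n2 → ℝ) (w : Fin m → ℝ), (x1 ≠ 0 ∨ x2 ≠ 0) →
        0 < Phi x1 x2 w) := by
    constructor
    · intro h x1 x2 w hx
      rw [id1 x1 x2 w]
      have h1 := h x1 x2 hx
      have h2 := dot_self_nonneg (w - sD2 *ᵥ (C1 *ᵥ x1))
      linarith
    · intro h x1 x2 hx
      have h1 := h x1 x2 (sD2 *ᵥ (C1 *ᵥ x1)) hx
      rw [id1] at h1
      simpa [sub_self] using h1
  have hiff23 : (∀ (x1 : Fin n1 → ℝ) (x2 : Fin n2 → ℝ) (w : Fin m → ℝ), (x1 ≠ 0 ∨ x2 ≠ 0) →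
        0 < Phi x1 x2 w) ↔
      (∀ (x1 : Fin n1 → ℝ) (x2 : Fin n2 → ℝ) (w : Fin m → ℝ), (w ≠ 0 ∨ x2 ≠ 0) →
        0 < Phi x1 x2 w) := by
    have hPhi00 : ∀ w : Fin m → ℝ, Phi 0 0 w = w ⬝ᵥ w := by
      intro w; simp [hPhi]
    have hPhi10 : ∀ x1 : Fin n1 → ℝ, Phi x1 0 0 = x1 ⬝ᵥ (P1 *ᵥ x1) := by
      intro x1; simp [hPhi]
    constructor
    · intro h x1 x2 w hwx
      by_cases hx : x1 ≠ 0 ∨ x2 ≠ 0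
      · exact h x1 x2 w hx
      · push_neg at hx
        obtain ⟨h1, h2⟩ := hx
        have hw : w ≠ 0 := by
          rcases hwx with h3 | h3
          · exact h3
          · exact absurd h2 h3
        rw [h1, h2, hPhi00 w]
        exact dot_self_pos hw
    · intro h x1 x2 w hx
      by_cases hwx : w ≠ 0 ∨ x2 ≠ 0
      · exact h x1 x2 w hwx
      · push_neg at hwx
        obtain ⟨h1, h2⟩ := hwx
        have hx1 : x1 ≠ 0 := by
          rcases hx with h3 | h3
          · exact h3
          · exact absurd h2 h3
        rw [h1, h2, hPhi10 x1]
        exact hP1pd x1 hx1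
  have hiff34 : (∀ (x1 : Fin n1 → ℝ) (x2 : Fin n2 → ℝ) (w : Fin m → ℝ), (w ≠ 0 ∨ x2 ≠ 0) →
        0 < Phi x1 x2 w) ↔
      (∀ (w : Fin m → ℝ) (x2 : Fin n2 → ℝ), (w ≠ 0 ∨ x2 ≠ 0) → 0 < QII w x2) := by
    constructor
    · intro h w x2 hwx
      have h1 := h (P1⁻¹ *ᵥ (C1ᵀ *ᵥ (sD2 *ᵥ w + C2 *ᵥ x2))) x2 w hwx
      rw [id2] at h1
      simpa [sub_self] using h1
    · intro h x1 x2 w hwx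
      rw [id2 x1 x2 w]
      have h1 := h w x2 hwx
      set z := x1 - P1⁻¹ *ᵥ (C1ᵀ *ᵥ (sD2 *ᵥ w + C2 *ᵥ x2)) with hz
      have h2 : 0 ≤ z ⬝ᵥ (P1 *ᵥ z) := by
        by_cases hz0 : z = 0
        · simp [hz0]
        · exact (hP1pd z hz0).le
      linarith
  have hiff45 : (∀ (w : Fin m → ℝ) (x2 : Fin n2 → ℝ), (w ≠ 0 ∨ x2 ≠ 0) → 0 < QII w x2) ↔
      (∀ y : Fin m → ℝ, y ≠ 0 →
        0 < y ⬝ᵥ y - (sH0 *ᵥ y) ⬝ᵥ (G0 *ᵥ (sH0 *ᵥ y))) := by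
    have hS2quad : ∀ s : Fin m → ℝ, s ⬝ᵥ ((C2 * P2⁻¹ * C2ᵀ) *ᵥ s)
        = (C2ᵀ *ᵥ s) ⬝ᵥ (P2⁻¹ *ᵥ (C2ᵀ *ᵥ s)) := by
      intro s
      rw [← Matrix.mulVec_mulVec, ← Matrix.mulVec_mulVec, dmv']
    have hsD2self : ∀ s : Fin m → ℝ, (sD2 *ᵥ s) ⬝ᵥ (sD2 *ᵥ s) = s ⬝ᵥ (D2 *ᵥ s) := by
      intro s
      rw [dmv, hsD2symm, Matrix.mulVec_mulVec, hsD2sq]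
    have hsH0self : ∀ s : Fin m → ℝ, (sH0 *ᵥ s) ⬝ᵥ (sH0 *ᵥ s) = s ⬝ᵥ (H0 *ᵥ s) := by
      intro s
      rw [dmv, hsH0symm, Matrix.mulVec_mulVec, hsH0sq]
    have hbbH0gen : ∀ s : Fin m → ℝ,
        sD2 *ᵥ (sD2 *ᵥ s) + C2 *ᵥ (P2⁻¹ *ᵥ (C2ᵀ *ᵥ s)) = H0 *ᵥ s := by
      intro s
      rw [Matrix.mulVec_mulVec, Matrix.mulVec_mulVec, Matrix.mulVec_mulVec, hsD2sq,
        hH0def, Matrix.add_mulVec]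
    have hnormgen : ∀ s : Fin m → ℝ,
        (sD2 *ᵥ s) ⬝ᵥ (sD2 *ᵥ s)
          + (P2⁻¹ *ᵥ (C2ᵀ *ᵥ s)) ⬝ᵥ (P2 *ᵥ (P2⁻¹ *ᵥ (C2ᵀ *ᵥ s))) = s ⬝ᵥ (H0 *ᵥ s) := by
      intro s
      have hPP : P2 *ᵥ (P2⁻¹ *ᵥ (C2ᵀ *ᵥ s)) = C2ᵀ *ᵥ s := by
        rw [Matrix.mulVec_mulVec (C2ᵀ *ᵥ s) P2 P2⁻¹, hP2inv, Matrix.one_mulVec]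
      have e2 : (P2⁻¹ *ᵥ (C2ᵀ *ᵥ s)) ⬝ᵥ (P2 *ᵥ (P2⁻¹ *ᵥ (C2ᵀ *ᵥ s)))
          = s ⬝ᵥ ((C2 * P2⁻¹ * C2ᵀ) *ᵥ s) := by
        rw [hPP, dmv, hP2invsymm, hS2quad s]
      rw [hsD2self, e2, hH0def, Matrix.add_mulVec, dotProduct_add]
    have hP2invquad : ∀ t : Fin n2 → ℝ, 0 ≤ t ⬝ᵥ (P2⁻¹ *ᵥ t) := by
      intro t
      by_cases ht : t = 0
      · simp [ht]
      · have := hP2invpd.dotProduct_mulVec_pos ht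
        have h2 : 0 < t ⬝ᵥ (P2⁻¹ *ᵥ t) := by simpa using this
        exact h2.le
    have hP2quadnn : ∀ t : Fin n2 → ℝ, 0 ≤ t ⬝ᵥ (P2 *ᵥ t) := by
      intro t
      by_cases ht : t = 0
      · simp [ht]
      · exact (hP2pd t ht).le
    constructor
    · intro h4 y hy
      obtain ⟨s, r, hydecomp, hr0, hrs⟩ := proj_decomp sH0 hsH0symm y
      have hbbH0 : sD2 *ᵥ (sD2 *ᵥ s) + C2 *ᵥ (P2⁻¹ *ᵥ (C2ᵀ *ᵥ s)) = H0 *ᵥ s := hbbH0gen s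
      have hsH0y : sH0 *ᵥ y = H0 *ᵥ s := by
        rw [hydecomp, Matrix.mulVec_add, hr0, add_zero, Matrix.mulVec_mulVec, hsH0sq]
      have hyy : s ⬝ᵥ (H0 *ᵥ s) = y ⬝ᵥ y - r ⬝ᵥ r := by
        rw [← hsH0self, hydecomp]
        simp only [dotProduct_add, add_dotProduct]
        have h2 : (sH0 *ᵥ s) ⬝ᵥ r = 0 := by rw [dotProduct_comm]; exact hrs
        rw [h2, hrs]
        ring
      by_cases hwx : sD2 *ᵥ s = 0 ∧ P2⁻¹ *ᵥ (C2ᵀ *ᵥ s) = 0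
      · have hb0 : sH0 *ᵥ y = 0 := by
          rw [hsH0y, ← hbbH0, hwx.1, hwx.2, Matrix.mulVec_zero, Matrix.mulVec_zero, add_zero]
        rw [hb0]
        simpa using dot_self_pos hy
      · have hwx' : sD2 *ᵥ s ≠ 0 ∨ P2⁻¹ *ᵥ (C2ᵀ *ᵥ s) ≠ 0 := by tauto
        have h4' := h4 (sD2 *ᵥ s) (P2⁻¹ *ᵥ (C2ᵀ *ᵥ s)) hwx'
        simp only [hQII] at h4'
        rw [hbbH0] at h4'
        have hnorm := hnormgen s
        have hrr := dot_self_nonneg r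
        rw [hsH0y]
        linarith
    · intro h5 w x2 hwx
      simp only [hQII]
      set bb : Fin m → ℝ := sD2 *ᵥ w + C2 *ᵥ x2 with hbb
      obtain ⟨s, r, hbdecomp, hr0, hrs⟩ := proj_decomp H0 hH0symm bb
      have hsplit : r ⬝ᵥ (D2 *ᵥ r) + (C2ᵀ *ᵥ r) ⬝ᵥ (P2⁻¹ *ᵥ (C2ᵀ *ᵥ r)) = 0 := by
        have h1 : r ⬝ᵥ (H0 *ᵥ r) = 0 := by rw [hr0, dotProduct_zero]
        rw [← hS2quad r, ← dotProduct_add]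
        rw [hH0def, Matrix.add_mulVec] at h1
        exact h1
      have hD2rzero : r ⬝ᵥ (D2 *ᵥ r) = 0 := by
        have h1 := hD2psd r
        have h2 := hP2invquad (C2ᵀ *ᵥ r)
        linarith
      have hS2rzero : (C2ᵀ *ᵥ r) ⬝ᵥ (P2⁻¹ *ᵥ (C2ᵀ *ᵥ r)) = 0 := by
        have h1 := hD2psd r
        linarith
      have hsD2r : sD2 *ᵥ r = 0 := by
        apply dotProduct_self_eq_zero.mp
        rw [hsD2self, hD2rzero]
      have hC2r : C2ᵀ *ᵥ r = 0 := by
        by_contra hne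
        have := hP2invpd.dotProduct_mulVec_pos hne
        simp only [star_trivial] at this
        exact absurd hS2rzero (ne_of_gt this)
      have hrbb : r ⬝ᵥ bb = 0 := by
        rw [hbb, dotProduct_add]
        have e1 : r ⬝ᵥ (sD2 *ᵥ w) = 0 := by
          rw [dmv', hsD2symm, hsD2r, zero_dotProduct]
        have e2 : r ⬝ᵥ (C2 *ᵥ x2) = 0 := by
          rw [dmv', hC2r, zero_dotProduct]
        rw [e1, e2, add_zero]
      have hrzero : r = 0 := by
        apply dotProduct_self_eq_zero.mp
        have h2 : r ⬝ᵥ bb = r ⬝ᵥ (H0 *ᵥ s) + r ⬝ᵥ r := by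
          rw [hbdecomp, dotProduct_add]
        rw [hrbb, hrs] at h2
        linarith
      have hbbH0s : bb = H0 *ᵥ s := by
        rw [hbdecomp, hrzero, add_zero]
      have hbb' : sD2 *ᵥ (sD2 *ᵥ s) + C2 *ᵥ (P2⁻¹ *ᵥ (C2ᵀ *ᵥ s)) = H0 *ᵥ s := hbbH0gen s
      have hdiff : sD2 *ᵥ (w - sD2 *ᵥ s) + C2 *ᵥ (x2 - P2⁻¹ *ᵥ (C2ᵀ *ᵥ s)) = 0 := by
        rw [Matrix.mulVec_sub, Matrix.mulVec_sub]
        have heq : (sD2 *ᵥ w - sD2 *ᵥ (sD2 *ᵥ s)) + (C2 *ᵥ x2 - C2 *ᵥ (P2⁻¹ *ᵥ (C2ᵀ *ᵥ s)))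
            = (sD2 *ᵥ w + C2 *ᵥ x2) - (sD2 *ᵥ (sD2 *ᵥ s) + C2 *ᵥ (P2⁻¹ *ᵥ (C2ᵀ *ᵥ s))) := by
          abel
        rw [heq, ← hbb, hbb', hbbH0s, sub_self]
      have hcross : (sD2 *ᵥ s) ⬝ᵥ (w - sD2 *ᵥ s)
          + (P2⁻¹ *ᵥ (C2ᵀ *ᵥ s)) ⬝ᵥ (P2 *ᵥ (x2 - P2⁻¹ *ᵥ (C2ᵀ *ᵥ s))) = 0 := by
        have e1 : (sD2 *ᵥ s) ⬝ᵥ (w - sD2 *ᵥ s) = s ⬝ᵥ (sD2 *ᵥ (w - sD2 *ᵥ s)) := by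
          rw [dmv, hsD2symm]
        have e2 : (P2⁻¹ *ᵥ (C2ᵀ *ᵥ s)) ⬝ᵥ (P2 *ᵥ (x2 - P2⁻¹ *ᵥ (C2ᵀ *ᵥ s)))
            = s ⬝ᵥ (C2 *ᵥ (x2 - P2⁻¹ *ᵥ (C2ᵀ *ᵥ s))) := by
          rw [dmv, hP2invsymm, Matrix.mulVec_mulVec, hP2inv', Matrix.one_mulVec, dmv,
            Matrix.transpose_transpose]
        rw [e1, e2, ← dotProduct_add, hdiff, dotProduct_zero]
      have hwdot : w ⬝ᵥ w = (sD2 *ᵥ s) ⬝ᵥ (sD2 *ᵥ s)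
          + 2 * ((sD2 *ᵥ s) ⬝ᵥ (w - sD2 *ᵥ s)) + (w - sD2 *ᵥ s) ⬝ᵥ (w - sD2 *ᵥ s) := by
        have hxw : sD2 *ᵥ s + (w - sD2 *ᵥ s) = w := by abel
        conv_lhs => rw [← hxw]
        simp only [dotProduct_add, add_dotProduct]
        rw [dotProduct_comm (w - sD2 *ᵥ s) (sD2 *ᵥ s)]
        ring
      have hx2dot : x2 ⬝ᵥ (P2 *ᵥ x2) = (P2⁻¹ *ᵥ (C2ᵀ *ᵥ s)) ⬝ᵥ (P2 *ᵥ (P2⁻¹ *ᵥ (C2ᵀ *ᵥ s)))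
          + 2 * ((P2⁻¹ *ᵥ (C2ᵀ *ᵥ s)) ⬝ᵥ (P2 *ᵥ (x2 - P2⁻¹ *ᵥ (C2ᵀ *ᵥ s))))
          + (x2 - P2⁻¹ *ᵥ (C2ᵀ *ᵥ s)) ⬝ᵥ (P2 *ᵥ (x2 - P2⁻¹ *ᵥ (C2ᵀ *ᵥ s))) := by
        have hP2dotcomm : ∀ a b : Fin n2 → ℝ, a ⬝ᵥ (P2 *ᵥ b) = b ⬝ᵥ (P2 *ᵥ a) := by
          intro a b
          rw [dotProduct_comm, dmv, hP2symm]
        have hxw : P2⁻¹ *ᵥ (C2ᵀ *ᵥ s) + (x2 - P2⁻¹ *ᵥ (C2ᵀ *ᵥ s)) = x2 := by abel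
        conv_lhs => rw [← hxw]
        simp only [dotProduct_add, add_dotProduct, Matrix.mulVec_add]
        rw [hP2dotcomm (x2 - P2⁻¹ *ᵥ (C2ᵀ *ᵥ s)) (P2⁻¹ *ᵥ (C2ᵀ *ᵥ s))]
        ring
      have hnorm := hnormgen s
      have hd1 := dot_self_nonneg (w - sD2 *ᵥ s)
      have hd2 := hP2quadnn (x2 - P2⁻¹ *ᵥ (C2ᵀ *ᵥ s))
      by_cases hy0 : sH0 *ᵥ s = 0
      · have hbb0 : bb = 0 := by
          rw [hbbH0s, ← hsH0sq, ← Matrix.mulVec_mulVec, hy0, Matrix.mulVec_zero]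
        rw [hbb0]
        simp only [Matrix.mulVec_zero, dotProduct_zero, sub_zero, zero_dotProduct]
        rcases hwx with hw | hx2ne
        · have := dot_self_pos hw
          have := hP2quadnn x2
          linarith
        · have := hP2pd x2 hx2ne
          have := dot_self_nonneg w
          linarith
      · have h5y := h5 _ hy0
        have hyb : sH0 *ᵥ (sH0 *ᵥ s) = bb := by
          rw [Matrix.mulVec_mulVec, hsH0sq, hbbH0s]
        rw [hyb, hsH0self] at h5y
        linarith
  have hiff56 : (∀ y : Fin m → ℝ, y ≠ 0 →
        0 < y ⬝ᵥ y - (sH0 *ᵥ y) ⬝ᵥ (G0 *ᵥ (sH0 *ᵥ y))) ↔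
      (∀ μ ∈ spectrum ℂ ((G0 * H0).map Complex.ofReal), μ.im = 0 ∧ μ.re < 1) := by
    have hRsymm : (sH0 * G0 * sH0)ᵀ = sH0 * G0 * sH0 := by
      rw [Matrix.transpose_mul, Matrix.transpose_mul, hsH0symm, hG0symm, ← Matrix.mul_assoc]
    have hquad : ∀ y : Fin m → ℝ,
        (sH0 *ᵥ y) ⬝ᵥ (G0 *ᵥ (sH0 *ᵥ y)) = y ⬝ᵥ ((sH0 * G0 * sH0) *ᵥ y) := by
      intro y
      rw [dmv, hsH0symm, Matrix.mulVec_mulVec, Matrix.mulVec_mulVec]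
    have hspec : spectrum ℂ ((G0 * H0).map Complex.ofReal)
        = spectrum ℂ ((sH0 * G0 * sH0).map Complex.ofReal) := by
      have e1 : G0 * H0 = (G0 * sH0) * sH0 := by rw [Matrix.mul_assoc, hsH0sq]
      have e2 : sH0 * G0 * sH0 = sH0 * (G0 * sH0) := by rw [Matrix.mul_assoc]
      have hm : ∀ (X : Matrix (Fin m) (Fin m) ℝ) (Y : Matrix (Fin m) (Fin m) ℝ),
          (X * Y).map Complex.ofReal = X.map Complex.ofReal * Y.map Complex.ofReal := by
        intro X Y
        exact Matrix.map_mul (f := Complex.ofRealHom)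
      rw [e1, e2]
      simp only [hm]
      exact spec_swap _ _
    constructor
    · intro h5 μ hμ
      rw [hspec] at hμ
      refine spec_cond_of_posdef hRsymm ?_ μ hμ
      intro x hx
      have := h5 x hx
      rw [hquad x] at this
      linarith
    · intro h6 y hy
      have hcond : ∀ μ ∈ spectrum ℂ ((sH0 * G0 * sH0).map Complex.ofReal),
          μ.im = 0 ∧ μ.re < 1 := by
        intro μ hμ
        exact h6 μ (by rw [hspec]; exact hμ)
      have := posdef_of_spec_cond hRsymm hcond y hy
      rw [hquad y]
      linarith
  exact hiff01.trans (hiff12.trans (hiff23.trans (hiff34.trans (hiff45.trans hiff56))))
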